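/- Fix q ∈ ℂ with q ≠ 0 and q not a root of unity. Let (e₋₁, e₁, A) be a Podleś representation with parameter ∞ on a finite-dimensional complex vector space V, i.e. e₋₁∘e₁ = id − A², e₁∘e₋₁ = id − q⁴·A², e₁∘A = q²·A∘e₁, e₋₁∘A = q⁻²·A∘e₋₁. Then A is nilpotent. -/

import Mathlib

/-- A Podleś representation with parameter `∞` on a complex vector space:
endomorphisms `e₋₁, e₁, A` satisfying `e₋₁∘e₁ = id − A²`, `e₁∘e₋₁ = id − q⁴·A²`,
`e₁∘A = q²·A∘e₁` and `e₋₁∘A = q⁻²·A∘e₋₁`. -/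
def PodlesRepInf (q : ℂ) {V : Type*} [AddCommGroup V] [Module ℂ V]
    (em e1 A : Module.End ℂ V) : Prop :=
  em * e1 = 1 - A ^ 2 ∧
  e1 * em = 1 - q ^ 4 • A ^ 2 ∧
  e1 * A = q ^ 2 • (A * e1) ∧
  em * A = (q ^ 2)⁻¹ • (A * em)

/-- Injectivity of `k ↦ rᵏ * c` when `r` is not a root of unity. -/
lemma pow_mul_const_inj (r : ℂ) (hr0 : r ≠ 0) (hr : ∀ n : ℕ, 0 < n → r ^ n ≠ 1)
    (c : ℂ) (hc : c ≠ 0) : Function.Injective fun k : ℕ => r ^ k * c := by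
  intro i j h
  simp only at h
  have hpow : r ^ i = r ^ j := mul_right_cancel₀ hc h
  by_contra hne
  rcases lt_or_gt_of_ne hne with hlt | hlt
  · have : r ^ i * r ^ (j - i) = r ^ i * 1 := by
      rw [mul_one, ← pow_add, Nat.add_sub_cancel' hlt.le, hpow]
    have h1 : r ^ (j - i) = 1 := mul_left_cancel₀ (pow_ne_zero _ hr0) this
    exact hr (j - i) (Nat.sub_pos_of_lt hlt) h1
  · have : r ^ j * r ^ (i - j) = r ^ j * 1 := by
      rw [mul_one, ← pow_add, Nat.add_sub_cancel' hlt.le, hpow.symm]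
    have h1 : r ^ (i - j) = 1 := mul_left_cancel₀ (pow_ne_zero _ hr0) this
    exact hr (i - j) (Nat.sub_pos_of_lt hlt) h1

/-- Upward step: if `μ` is an eigenvalue with `q⁴μ² ≠ 1`, then `q²μ` is an eigenvalue. -/
lemma eig_step_up {V : Type*} [AddCommGroup V] [Module ℂ V]
    (q : ℂ) (hq : q ≠ 0) (em e1 A : Module.End ℂ V)
    (h2 : e1 * em = 1 - q ^ 4 • A ^ 2)
    (h4 : em * A = (q ^ 2)⁻¹ • (A * em))
    {μ : ℂ} (hμ : Module.End.HasEigenvalue A μ) (hne : q ^ 4 * μ ^ 2 ≠ 1) :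
    Module.End.HasEigenvalue A (q ^ 2 * μ) := by
  obtain ⟨v, hv, hv0⟩ := hμ.exists_hasEigenvector
  rw [Module.End.mem_eigenspace_iff] at hv
  have hq2 : (q : ℂ) ^ 2 ≠ 0 := pow_ne_zero _ hq
  have hA2 : (A ^ 2) v = μ ^ 2 • v := by
    rw [pow_two, Module.End.mul_apply, hv, map_smul, hv, smul_smul, ← pow_two]
  have hAem : A * em = q ^ 2 • (em * A) := by
    rw [h4, smul_smul, mul_inv_cancel₀ hq2, one_smul]
  have hw0 : em v ≠ 0 := by
    intro h
    have he : e1 (em v) = 0 := by rw [h, map_zero]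
    have he' : e1 (em v) = (1 - q ^ 4 * μ ^ 2) • v := by
      have h2v := LinearMap.ext_iff.mp h2 v
      simpa [Module.End.mul_apply, hA2, sub_smul, smul_smul] using h2v
    rw [he] at he'
    exact smul_ne_zero (sub_ne_zero.mpr (Ne.symm hne)) hv0 he'.symm
  have heig : A (em v) = (q ^ 2 * μ) • em v := by
    have hAemv := LinearMap.ext_iff.mp hAem v
    simpa [Module.End.mul_apply, hv, map_smul, smul_smul] using hAemv
  exact Module.End.hasEigenvalue_of_hasEigenvector
    ⟨Module.End.mem_eigenspace_iff.mpr heig, hw0⟩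

/-- Downward step: if `μ` is an eigenvalue with `μ² ≠ 1`, then `q⁻²μ` is an eigenvalue. -/
lemma eig_step_down {V : Type*} [AddCommGroup V] [Module ℂ V]
    (q : ℂ) (hq : q ≠ 0) (em e1 A : Module.End ℂ V)
    (h1 : em * e1 = 1 - A ^ 2)
    (h3 : e1 * A = q ^ 2 • (A * e1))
    {μ : ℂ} (hμ : Module.End.HasEigenvalue A μ) (hne : μ ^ 2 ≠ 1) :
    Module.End.HasEigenvalue A ((q ^ 2)⁻¹ * μ) := by
  obtain ⟨v, hv, hv0⟩ := hμ.exists_hasEigenvector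
  rw [Module.End.mem_eigenspace_iff] at hv
  have hq2 : (q : ℂ) ^ 2 ≠ 0 := pow_ne_zero _ hq
  have hA2 : (A ^ 2) v = μ ^ 2 • v := by
    rw [pow_two, Module.End.mul_apply, hv, map_smul, hv, smul_smul, ← pow_two]
  have hAe1 : A * e1 = (q ^ 2)⁻¹ • (e1 * A) := by
    rw [h3, smul_smul, inv_mul_cancel₀ hq2, one_smul]
  have hw0 : e1 v ≠ 0 := by
    intro h
    have he : em (e1 v) = 0 := by rw [h, map_zero]
    have he' : em (e1 v) = (1 - μ ^ 2) • v := by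
      have h1v := LinearMap.ext_iff.mp h1 v
      simpa [Module.End.mul_apply, hA2, sub_smul] using h1v
    rw [he] at he'
    exact smul_ne_zero (sub_ne_zero.mpr (Ne.symm hne)) hv0 he'.symm
  have heig : A (e1 v) = ((q ^ 2)⁻¹ * μ) • e1 v := by
    have hAe1v := LinearMap.ext_iff.mp hAe1 v
    simpa [Module.End.mul_apply, hv, map_smul, smul_smul] using hAe1v
  exact Module.End.hasEigenvalue_of_hasEigenvector
    ⟨Module.End.mem_eigenspace_iff.mpr heig, hw0⟩

/-- If `q` is nonzero and not a root of unity, then `A` is nilpotent in any finite-dimensional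
Podleś representation with parameter `∞`. -/
theorem stmt3 {V : Type*} [AddCommGroup V] [Module ℂ V] [FiniteDimensional ℂ V]
    (q : ℂ) (hq : q ≠ 0) (hq' : ∀ n : ℕ, 0 < n → q ^ n ≠ 1)
    (em e1 A : Module.End ℂ V) (hrep : PodlesRepInf q em e1 A) :
    IsNilpotent A := by
  obtain ⟨hr1, hr2, hr3, hr4⟩ := hrep
  by_contra hnil
  -- A has a nonzero eigenvalue
  have hint : IsIntegral ℂ A := Algebra.IsIntegral.isIntegral A
  have hmon : (minpoly ℂ A).Monic := minpoly.monic hint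
  have hsplit : Polynomial.Splits (minpoly ℂ A) :=
    IsAlgClosed.splits _
  have hex : ∃ μ ∈ (minpoly ℂ A).roots, μ ≠ 0 := by
    by_contra hall
    push_neg at hall
    apply hnil
    have hprod := hsplit.eq_prod_roots_of_monic hmon
    have hrep : ((minpoly ℂ A).roots.map fun a => Polynomial.X - Polynomial.C a) =
        Multiset.replicate (minpoly ℂ A).roots.card Polynomial.X := by
      rw [Multiset.eq_replicate]
      refine ⟨by simp, ?_⟩
      intro b hb
      obtain ⟨a, ha, rfl⟩ := Multiset.mem_map.mp hb
      rw [hall a ha]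
      simp
    rw [hrep, Multiset.prod_replicate] at hprod
    refine ⟨(minpoly ℂ A).roots.card, ?_⟩
    have := minpoly.aeval ℂ A
    rw [hprod] at this
    simpa using this
  obtain ⟨μ, hμmem, hμ0⟩ := hex
  have hμeig : Module.End.HasEigenvalue A μ :=
    Module.End.hasEigenvalue_of_isRoot
      (Polynomial.isRoot_of_mem_roots hμmem)
  -- downward chain
  have down : ∀ k : ℕ, (∀ j < k, (((q ^ 2)⁻¹) ^ j * μ) ^ 2 ≠ 1) →
      Module.End.HasEigenvalue A (((q ^ 2)⁻¹) ^ k * μ) := by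
    intro k
    induction k with
    | zero => intro _; simpa using hμeig
    | succ n ih =>
      intro h
      have hprev := ih fun j hj => h j (hj.trans n.lt_succ_self)
      have := eig_step_down q hq em e1 A hr1 hr3 hprev (h n n.lt_succ_self)
      have heq : (q ^ 2)⁻¹ * (((q ^ 2)⁻¹) ^ n * μ) = ((q ^ 2)⁻¹) ^ (n + 1) * μ := by
        rw [pow_succ]; ring
      rwa [heq] at this
  have hfin := Module.End.finite_hasEigenvalue A
  by_cases hall : ∀ k : ℕ, (((q ^ 2)⁻¹) ^ k * μ) ^ 2 ≠ 1
  · -- infinitely many eigenvalues: contradiction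
    have hr' : ∀ n : ℕ, 0 < n → ((q ^ 2)⁻¹) ^ n ≠ 1 := by
      intro n hn h
      rw [inv_pow, inv_eq_one, ← pow_mul] at h
      exact hq' (2 * n) (by omega) h
    have hinj := pow_mul_const_inj ((q ^ 2)⁻¹) (inv_ne_zero (pow_ne_zero _ hq)) hr' μ hμ0
    exact (Set.infinite_of_injective_forall_mem hinj
      fun k => down k fun j _ => hall j) hfin
  · push_neg at hall
    have hk : ∃ k : ℕ, (((q ^ 2)⁻¹) ^ k * μ) ^ 2 = 1 := hall
    classical
    set k₀ := Nat.find hk with hk₀def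
    have hk₀ : (((q ^ 2)⁻¹) ^ k₀ * μ) ^ 2 = 1 := Nat.find_spec hk
    have hνeig : Module.End.HasEigenvalue A (((q ^ 2)⁻¹) ^ k₀ * μ) :=
      down k₀ fun j hj => Nat.find_min hk hj
    set ν := ((q ^ 2)⁻¹) ^ k₀ * μ with hνdef
    have hν0 : ν ≠ 0 := by
      intro h
      rw [h] at hk₀
      simp at hk₀
    -- upward chain
    have up : ∀ j : ℕ, Module.End.HasEigenvalue A ((q ^ 2) ^ j * ν) := by
      intro j
      induction j with
      | zero => simpa using hνeig
      | succ n ih =>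
        have hne : q ^ 4 * ((q ^ 2) ^ n * ν) ^ 2 ≠ 1 := by
          have : q ^ 4 * ((q ^ 2) ^ n * ν) ^ 2 = q ^ (4 * n + 4) := by
            rw [mul_pow, hk₀, mul_one, ← pow_mul, ← pow_mul, ← pow_add]
            congr 1
            omega
          rw [this]
          exact hq' (4 * n + 4) (by omega)
        have := eig_step_up q hq em e1 A hr2 hr4 ih hne
        have heq : q ^ 2 * ((q ^ 2) ^ n * ν) = (q ^ 2) ^ (n + 1) * ν := by
          rw [pow_succ]; ring
        rwa [heq] at this
    have hr' : ∀ n : ℕ, 0 < n → (q ^ 2) ^ n ≠ 1 := by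
      intro n hn h
      rw [← pow_mul] at h
      exact hq' (2 * n) (by omega) h
    have hinj := pow_mul_const_inj (q ^ 2) (pow_ne_zero _ hq) hr' ν hν0
    exact (Set.infinite_of_injective_forall_mem hinj up) hfin
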